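/- Let q ∈ ℂ[x,y] be a polynomial whose leading quasi-homogeneous part with respect to the weights (k,l) equals x^k + y^l, where k, l ≥ 2 are coprime integers. Then for every δ > 0 there exists r > 0 such that for all (x,y) ∈ ℂ²: if ∂q/∂y (x,y) = 0 and |q(x,y)| < δ, then |x| < r. -/

import Mathlib

open MvPolynomial

/-- The weighted degree of `r ∈ ℂ[x,y]` with respect to the weights `deg x = l`,
`deg y = k`: the maximum of `l·i + k·j` over monomials `x^i y^j` of `r`. -/
noncomputable def wdeg (k l : ℕ) (r : MvPolynomial (Fin 2) ℂ) : ℕ :=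
  r.weightedTotalDegree ![l, k]

/-- The leading quasi-homogeneous part of `r ∈ ℂ[x,y]` with respect to the weights
`(k, l)`: the sum of the monomials `a_{ij} x^i y^j` of `r` with `l·i + k·j` maximal. -/
noncomputable def leadingPart (k l : ℕ) (r : MvPolynomial (Fin 2) ℂ) :
    MvPolynomial (Fin 2) ℂ :=
  ∑ s ∈ r.support.filter (fun s => l * s 0 + k * s 1 = wdeg k l r),
    monomial s (coeff s r)

lemma weight_two (k l : ℕ) (s : Fin 2 →₀ ℕ) :
    (Finsupp.weight ![l, k]) s = l * s 0 + k * s 1 := by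
  rw [Finsupp.weight_apply, Finsupp.sum_fintype]
  · simp [Fin.sum_univ_two, mul_comm]
  · intro i; simp

lemma coeff_leadingPart (k l : ℕ) (q : MvPolynomial (Fin 2) ℂ) (s : Fin 2 →₀ ℕ) :
    coeff s (leadingPart k l q) =
      if l * s 0 + k * s 1 = wdeg k l q then coeff s q else 0 := by
  classical
  rw [leadingPart]
  rw [MvPolynomial.coeff_sum]
  rw [Finset.sum_congr rfl (fun t _ => MvPolynomial.coeff_monomial s t (coeff t q))]
  rw [Finset.sum_ite_eq' (q.support.filter _) s (fun t => coeff t q)]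
  by_cases hmem : s ∈ q.support.filter (fun s => l * s 0 + k * s 1 = wdeg k l q)
  · rw [if_pos hmem]
    rw [Finset.mem_filter] at hmem
    rw [if_pos hmem.2]
  · rw [if_neg hmem]
    rw [Finset.mem_filter] at hmem
    by_cases hw : l * s 0 + k * s 1 = wdeg k l q
    · rw [if_pos hw]
      by_cases hs : s ∈ q.support
      · exact absurd ⟨hs, hw⟩ hmem
      · rw [MvPolynomial.notMem_support_iff] at hs; exact hs.symm
    · rw [if_neg hw]

lemma eval_abs_le (k l D : ℕ) (p : MvPolynomial (Fin 2) ℂ)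
    (hD : ∀ s ∈ p.support, l * s 0 + k * s 1 ≤ D) (x y : ℂ) (t : ℝ) (ht : 1 ≤ t)
    (hx : ‖x‖ ≤ t ^ l) (hy : ‖y‖ ≤ t ^ k) :
    ‖eval ![x, y] p‖ ≤ (∑ s ∈ p.support, ‖coeff s p‖) * t ^ D := by
  have ht0 : (0:ℝ) ≤ t := le_trans zero_le_one ht
  rw [MvPolynomial.eval_eq']
  refine le_trans (norm_sum_le _ _) ?_
  rw [Finset.sum_mul]
  refine Finset.sum_le_sum fun s hs => ?_
  rw [norm_mul]
  refine mul_le_mul_of_nonneg_left ?_ (norm_nonneg _)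
  rw [Fin.prod_univ_two]
  simp only [Matrix.cons_val_zero, Matrix.cons_val_one, Matrix.head_cons]
  rw [norm_mul, norm_pow, norm_pow]
  calc ‖x‖ ^ s 0 * ‖y‖ ^ s 1
      ≤ (t ^ l) ^ s 0 * (t ^ k) ^ s 1 := by gcongr
    _ = t ^ (l * s 0 + k * s 1) := by rw [← pow_mul, ← pow_mul, ← pow_add]
    _ ≤ t ^ D := pow_le_pow_right₀ ht (hD s hs)

lemma pderiv_support_le (k l D : ℕ) (p : MvPolynomial (Fin 2) ℂ)
    (hD : ∀ s ∈ p.support, l * s 0 + k * s 1 ≤ D) :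
    ∀ s ∈ (pderiv (1 : Fin 2) p).support, l * s 0 + k * s 1 + k ≤ D := by
  classical
  intro s hs
  rw [MvPolynomial.mem_support_iff] at hs
  have hrep : pderiv (1 : Fin 2) p
      = ∑ t ∈ p.support, monomial (t - Finsupp.single 1 1) (coeff t p * t 1) := by
    conv_lhs => rw [p.as_sum, map_sum]
    exact Finset.sum_congr rfl fun t _ => pderiv_monomial
  rw [hrep, MvPolynomial.coeff_sum] at hs
  obtain ⟨t, ht, hne⟩ := Finset.exists_ne_zero_of_sum_ne_zero hs
  rw [MvPolynomial.coeff_monomial] at hne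
  by_cases heq : t - Finsupp.single 1 1 = s
  · have ht1 : t 1 ≠ 0 := by
      intro h0
      apply hne
      rw [if_pos heq, h0]
      simp
    have hs0 : s 0 = t 0 := by
      rw [← heq, Finsupp.tsub_apply]
      simp
    have hs1 : s 1 = t 1 - 1 := by
      rw [← heq, Finsupp.tsub_apply]
      simp
    have hDt := hD t ht
    have h1 : 1 ≤ t 1 := Nat.one_le_iff_ne_zero.mpr ht1
    rw [hs0, hs1]
    have hmul : k * (t 1 - 1) + k = k * t 1 := by
      obtain ⟨m, hm⟩ := Nat.exists_eq_add_of_le h1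
      rw [hm]
      simp [Nat.add_sub_cancel_left, Nat.mul_add, Nat.mul_comm]
      ring
    rw [add_assoc, hmul]
    exact hDt
  · exact absurd (if_neg heq) hne

set_option maxHeartbeats 1000000 in
/-- Lemma 3 of the paper: if the leading quasi-homogeneous part of `q` with respect to
coprime weights `(k, l)`, `k, l ≥ 2`, is `x^k + y^l`, then for every `δ > 0` there is
`r > 0` such that every point `(x,y)` with `∂q/∂y(x,y) = 0` and `|q(x,y)| < δ` satisfies
`|x| < r`. -/
theorem critical_points_over_bounded_disc
    (q : MvPolynomial (Fin 2) ℂ)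
    (k l : ℕ) (hk : 2 ≤ k) (hl : 2 ≤ l) (hkl : Nat.Coprime k l)
    (hlead : leadingPart k l q = X 0 ^ k + X 1 ^ l) :
    ∀ δ : ℝ, 0 < δ → ∃ r : ℝ, 0 < r ∧ ∀ x y : ℂ,
      eval ![x, y] (pderiv 1 q) = 0 → ‖eval ![x, y] q‖ < δ →
      ‖x‖ < r := by
  classical
  intro δ hδ
  have hk0 : k ≠ 0 := by omega
  have hl0 : l ≠ 0 := by omega
  set p : MvPolynomial (Fin 2) ℂ := q - (X 0 ^ k + X 1 ^ l) with hp_def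
  -- the two top monomials are distinct
  have hne : (Finsupp.single (0 : Fin 2) k) ≠ Finsupp.single (1 : Fin 2) l := by
    intro h
    have := DFunLike.congr_fun h 0
    rw [Finsupp.single_eq_same, Finsupp.single_eq_of_ne' (by decide : (1 : Fin 2) ≠ 0)] at this
    exact hk0 this
  have hcoefftop : ∀ s : Fin 2 →₀ ℕ,
      coeff s (X 0 ^ k + X 1 ^ l : MvPolynomial (Fin 2) ℂ)
        = (if Finsupp.single 0 k = s then 1 else 0)
          + (if Finsupp.single 1 l = s then 1 else 0) := by
    intro s
    rw [coeff_add, X_pow_eq_monomial, X_pow_eq_monomial, coeff_monomial, coeff_monomial]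
  -- the weighted degree of q is l * k
  have hwd : wdeg k l q = l * k := by
    have h1 := coeff_leadingPart k l q (Finsupp.single 0 k)
    rw [hlead, hcoefftop, if_pos rfl, if_neg (fun h => hne h.symm)] at h1
    rw [Finsupp.single_eq_same, Finsupp.single_eq_of_ne' (by decide : (0 : Fin 2) ≠ 1)] at h1
    simp only [mul_zero, add_zero] at h1
    by_cases hcond : l * k = wdeg k l q
    · exact hcond.symm
    · rw [if_neg hcond] at h1
      norm_num at h1
  -- all monomials of p have weighted degree < k * l
  have hpD : ∀ s ∈ p.support, l * s 0 + k * s 1 ≤ k * l - 1 := by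
    intro s hs
    rw [MvPolynomial.mem_support_iff] at hs
    by_contra hgt
    push_neg at hgt
    have hkl1 : 1 ≤ k * l := Nat.one_le_iff_ne_zero.mpr (Nat.mul_ne_zero hk0 hl0)
    have hge : k * l ≤ l * s 0 + k * s 1 := by omega
    apply hs
    rw [hp_def, coeff_sub]
    rcases eq_or_lt_of_le hge with heq | hlt
    · have h2 := coeff_leadingPart k l q s
      rw [hlead] at h2
      have h3 : coeff s (X 0 ^ k + X 1 ^ l : MvPolynomial (Fin 2) ℂ) = coeff s q := by
        rw [h2, if_pos (by rw [hwd, ← heq, mul_comm])]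
      rw [h3, sub_self]
    · have hq0 : coeff s q = 0 := by
        by_contra h
        have hle := MvPolynomial.le_weightedTotalDegree (M := ℕ) ![l, k]
          (MvPolynomial.mem_support_iff.mpr h)
        rw [weight_two] at hle
        have : q.weightedTotalDegree ![l, k] = wdeg k l q := rfl
        rw [this, hwd] at hle
        have : k * l = l * k := mul_comm k l
        omega
      have hx0 : coeff s (X 0 ^ k + X 1 ^ l : MvPolynomial (Fin 2) ℂ) = 0 := by
        rw [hcoefftop]
        rw [if_neg, if_neg]
        · norm_num
        · intro h
          rw [← h, Finsupp.single_eq_of_ne' (by decide : (1 : Fin 2) ≠ 0),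
            Finsupp.single_eq_same, mul_zero, zero_add] at hlt
          omega
        · intro h
          rw [← h, Finsupp.single_eq_same,
            Finsupp.single_eq_of_ne' (by decide : (0 : Fin 2) ≠ 1),
            mul_zero, add_zero] at hlt
          exact absurd (mul_comm l k) (by omega)
      rw [hq0, hx0, sub_zero]
  set p' : MvPolynomial (Fin 2) ℂ := pderiv 1 p with hp'_def
  have hD' : ∀ s ∈ p'.support, l * s 0 + k * s 1 ≤ k * l - 1 - k := by
    intro s hs
    have h := pderiv_support_le k l (k * l - 1) p hpD s hs
    omega
  set C : ℝ := ∑ s ∈ p.support, ‖coeff s p‖ with hC_def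
  set C' : ℝ := ∑ s ∈ p'.support, ‖coeff s p'‖ with hC'_def
  have hC0 : 0 ≤ C := Finset.sum_nonneg fun s _ => norm_nonneg _
  have hC'0 : 0 ≤ C' := Finset.sum_nonneg fun s _ => norm_nonneg _
  set B : ℝ := C + C' + 1 with hB_def
  have hB1 : 1 ≤ B := by simp only [hB_def]; linarith
  have hB0 : 0 ≤ B := by linarith
  clear_value p p' C C' B
  refine ⟨(4 * B ^ 2) ^ l + 2 * δ + 2, by positivity, ?_⟩
  intro x y hcrit hq
  have hq_eq : q = (X 0 ^ k + X 1 ^ l) + p := by rw [hp_def]; ring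
  have heval_q : eval ![x, y] q = x ^ k + y ^ l + eval ![x, y] p := by
    conv_lhs => rw [hq_eq]
    simp [eval_add, eval_pow, eval_X]
  have heval_d : eval ![x, y] (pderiv 1 q) = (l : ℂ) * y ^ (l - 1) + eval ![x, y] p' := by
    conv_lhs => rw [hq_eq]
    simp only [map_add, pderiv_pow, pderiv_X_self, pderiv_X_of_ne (by decide : (0 : Fin 2) ≠ 1),
      mul_zero, zero_add, mul_one]
    simp [eval_add, eval_mul, eval_pow, eval_X, map_natCast, mul_zero, mul_one, hp'_def]
  -- absolute values
  set Xa : ℝ := ‖x‖ with hXa_def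
  set Ya : ℝ := ‖y‖ with hYa_def
  have hXa0 : 0 ≤ Xa := norm_nonneg _
  have hYa0 : 0 ≤ Ya := norm_nonneg _
  have hYeq : (l : ℝ) * Ya ^ (l - 1) = ‖eval ![x, y] p'‖ := by
    have h1 : (l : ℂ) * y ^ (l - 1) = - eval ![x, y] p' := by
      rw [heval_d] at hcrit
      linear_combination hcrit
    calc (l:ℝ) * Ya ^ (l-1) = ‖(l:ℂ) * y ^ (l-1)‖ := by
          rw [norm_mul, norm_pow, Complex.norm_natCast]
      _ = ‖- eval ![x,y] p'‖ := by rw [h1]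
      _ = _ := norm_neg _
  set sR : ℝ := max 1 (Xa ^ (l:ℝ)⁻¹) with hsR_def
  have hs1 : 1 ≤ sR := le_max_left _ _
  have hs0 : 0 ≤ sR := by linarith
  have hXrt : (Xa ^ ((l:ℝ))⁻¹) ^ l = Xa := Real.rpow_inv_natCast_pow hXa0 hl0
  have hXs : Xa ≤ sR ^ l := by
    rw [← hXrt]
    exact pow_le_pow_left₀ (Real.rpow_nonneg hXa0 _) (le_max_right _ _) l
  have hkl_k : k + 1 ≤ k * l := by
    have h := Nat.mul_le_mul_left k hl
    omega
  have hl_kl : l + 1 ≤ k * l := by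
    have h := Nat.mul_le_mul_left l hk
    have h2 : l * k = k * l := mul_comm l k
    omega
  by_cases hYcase : Ya ≤ sR ^ k
  · -- Case A : y is controlled by x
    have hEp := eval_abs_le k l (k*l-1) p hpD x y sR hs1 hXs hYcase
    have hEp' := eval_abs_le k l (k*l-1-k) p' hD' x y sR hs1 hXs hYcase
    rw [← hC_def] at hEp
    rw [← hC'_def] at hEp'
    have hY1 : Ya ^ (l-1) ≤ B * sR ^ (k*l-1-k) := by
      have h2 : Ya ^ (l-1) ≤ (l:ℝ) * Ya ^ (l-1) :=
        le_mul_of_one_le_left (pow_nonneg hYa0 _)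
          (by exact_mod_cast Nat.one_le_iff_ne_zero.mpr hl0)
      have h3 : C' * sR ^ (k*l-1-k) ≤ B * sR ^ (k*l-1-k) := by
        apply mul_le_mul_of_nonneg_right _ (pow_nonneg hs0 _)
        rw [hB_def]; linarith
      rw [hYeq] at h2
      linarith [hEp']
    have hexp_ineq : (k*l-1-k)*l ≤ (k*l-1)*(l-1) := by
      have h1 : k + 1 ≤ k * l := hkl_k
      zify [show 1 ≤ k*l by omega, show k ≤ k*l-1 by omega, show 1 ≤ l by omega]
      nlinarith [h1]
    have hYl : Ya ^ l ≤ B^2 * sR^(k*l-1) := by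
      have hrhs0 : 0 ≤ B^2 * sR^(k*l-1) := mul_nonneg (pow_nonneg hB0 2) (pow_nonneg hs0 _)
      refine le_of_pow_le_pow_left₀ (by omega : l - 1 ≠ 0) hrhs0 ?_
      calc (Ya^l)^(l-1) = (Ya^(l-1))^l := by rw [← pow_mul, ← pow_mul, mul_comm]
        _ ≤ (B * sR^(k*l-1-k))^l := pow_le_pow_left₀ (pow_nonneg hYa0 _) hY1 l
        _ = B^l * sR^((k*l-1-k)*l) := by rw [mul_pow, ← pow_mul]
        _ ≤ B^(2*(l-1)) * sR^((k*l-1)*(l-1)) :=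
            mul_le_mul (pow_le_pow_right₀ hB1 (by omega))
              (pow_le_pow_right₀ hs1 hexp_ineq) (pow_nonneg hs0 _) (pow_nonneg hB0 _)
        _ = (B^2 * sR^(k*l-1))^(l-1) := by rw [mul_pow, ← pow_mul, ← pow_mul]
    have hxk_eq : x ^ k = eval ![x,y] q - y^l - eval ![x,y] p := by
      rw [heval_q]; ring
    have habs : Xa^k ≤ ‖eval ![x,y] q‖ + Ya^l + ‖eval ![x,y] p‖ := by
      have t1 : ‖eval ![x,y] q - y^l - eval ![x,y] p‖
          ≤ ‖eval ![x,y] q - y^l‖ + ‖eval ![x,y] p‖ := by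
        exact norm_sub_le _ _
      have t2 : ‖eval ![x,y] q - y^l‖
          ≤ ‖eval ![x,y] q‖ + ‖y^l‖ := by
        exact norm_sub_le _ _
      have t3 : Xa^k = ‖x^k‖ := (norm_pow _ _).symm
      have t4 : ‖y^l‖ = Ya^l := norm_pow _ _
      rw [t3, hxk_eq]
      linarith [t1, t2, t4.le, t4.ge]
    have hCB : C ≤ B^2 := by nlinarith [hB1, hC0, hC'0]
    have hXk : Xa^k ≤ δ + 2*B^2*sR^(k*l-1) := by
      have h7 : C * sR^(k*l-1) ≤ B^2 * sR^(k*l-1) :=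
        mul_le_mul_of_nonneg_right hCB (pow_nonneg hs0 _)
      calc Xa^k ≤ ‖eval ![x,y] q‖ + Ya^l + ‖eval ![x,y] p‖ := habs
        _ ≤ δ + B^2*sR^(k*l-1) + C*sR^(k*l-1) := by linarith [hq, hYl, hEp]
        _ ≤ δ + 2*B^2*sR^(k*l-1) := by linarith [h7]
    have h4B : (0:ℝ) ≤ 4*B^2 := by positivity
    by_cases hX1 : Xa ≤ 1
    · have := pow_nonneg h4B l
      linarith [hδ]
    · push_neg at hX1
      have hsl : sR ^ l = Xa := by
        have hmax : sR = Xa ^ ((l:ℝ))⁻¹ :=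
          max_eq_right (Real.one_le_rpow hX1.le (by positivity))
        rw [hmax, hXrt]
      by_cases hs4 : sR ≤ 4*B^2
      · have hle : Xa ≤ (4*B^2)^l := by
          rw [← hsl]; exact pow_le_pow_left₀ hs0 hs4 l
        linarith [hδ]
      · push_neg at hs4
        have hpow : sR ^ (k*l) = Xa ^ k := by rw [mul_comm k l, pow_mul, hsl]
        have hsucc : sR ^ (k*l-1) * sR = sR ^ (k*l) := by
          rw [← pow_succ]
          congr 1
          omega
        have hXle : Xa ≤ sR ^ (k*l-1) := by
          rw [← hsl]; exact pow_le_pow_right₀ hs1 (Nat.le_sub_one_of_lt hl_kl)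
        have e2 : sR^(k*l-1) * sR ≤ δ + 2*B^2 * sR^(k*l-1) := by
          rw [hsucc, hpow]; exact hXk
        have hsB : 2*B^2 + 2 ≤ sR := by nlinarith [hB1]
        have h5 : (0:ℝ) ≤ (sR^(k*l-1) - Xa) * (sR - 2*B^2) :=
          mul_nonneg (by linarith) (by linarith)
        have h6 : (0:ℝ) ≤ Xa * (sR - 2*B^2 - 2) := mul_nonneg hXa0 (by linarith)
        have e3 : 2 * Xa ≤ δ := by nlinarith [e2, h5, h6]
        have := pow_nonneg h4B l
        linarith [hδ]
  · -- Case B : y dominates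
    push_neg at hYcase
    have hY1 : 1 < Ya := lt_of_le_of_lt (one_le_pow₀ hs1) hYcase
    set u : ℝ := Ya ^ ((k:ℝ))⁻¹ with hu_def
    have hu0 : 0 ≤ u := Real.rpow_nonneg hYa0 _
    have hu1 : 1 ≤ u := Real.one_le_rpow hY1.le (by positivity)
    have huk : u ^ k = Ya := Real.rpow_inv_natCast_pow hYa0 hk0
    have hsu : sR ≤ u := by
      refine le_of_pow_le_pow_left₀ hk0 hu0 ?_
      rw [huk]; exact hYcase.le
    have hXu : Xa ≤ u ^ l := hXs.trans (pow_le_pow_left₀ hs0 hsu l)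
    have hEp' := eval_abs_le k l (k*l-1-k) p' hD' x y u hu1 hXu huk.ge
    rw [← hC'_def] at hEp'
    have hYpow : Ya ^ (l-1) = u ^ (k*l-1-k) * u := by
      rw [← huk, ← pow_mul, ← pow_succ]
      congr 1
      have h1 : k*(l-1) + k = k*l := by
        conv_rhs => rw [show l = (l-1)+1 by omega]
        ring
      have h2 : k + 1 ≤ k * l := hkl_k
      omega
    have hlin : (l:ℝ) * (u^(k*l-1-k) * u) ≤ C' * u^(k*l-1-k) := by
      rw [← hYpow, hYeq]; exact hEp'
    have hupos : 0 < u^(k*l-1-k) := pow_pos (lt_of_lt_of_le one_pos hu1) _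
    have hl2 : (2:ℝ) ≤ l := by exact_mod_cast hl
    have huB : 2*u ≤ B := by
      have h3 : 2*u*u^(k*l-1-k) ≤ C' * u^(k*l-1-k) := by
        have hl2' : (0:ℝ) ≤ (l:ℝ) - 2 := by linarith
        have hx : (0:ℝ) ≤ ((l:ℝ)-2) * (u * u^(k*l-1-k)) :=
          mul_nonneg hl2' (mul_nonneg hu0 hupos.le)
        nlinarith [hlin, hx]
      have h4 : 2*u ≤ C' := le_of_mul_le_mul_right (by linarith [h3]) hupos
      rw [hB_def]; linarith
    have hXB : Xa ≤ B^l := le_trans hXu (pow_le_pow_left₀ hu0 (by linarith) l)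
    have hBle : B^l ≤ (4*B^2)^l := pow_le_pow_left₀ hB0 (by nlinarith [hB1]) l
    linarith [hδ]
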